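/- For the vertex-reinforced random walk (X_n) on ℤ and any site x, the three events Υ(x) = {Y_∞(x) < ∞}, Υ⁺(x) = {Y⁺_∞(x) < ∞}, and Υ⁻(x) = {Y⁻_∞(x) < ∞} coincide almost surely. -/

import Mathlib

open MeasureTheory Filter

/-- `Znum X n v ω` is `1` plus the number of visits of the walk `X` to the site
`v` up through time `n` (the quantity `Z_n(v)` of the paper), as a real number. -/
noncomputable def Znum {Ω : Type*} (X : ℕ → Ω → ℤ) (n : ℕ) (v : ℤ) (ω : Ω) : ℝ :=
  1 + ∑ i ∈ Finset.range (n + 1), if X i ω = v then (1 : ℝ) else 0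

/-- `Y_n(x)`: weighted number of visits to `x` up to time `n`. -/
noncomputable def Ynum {Ω : Type*} (X : ℕ → Ω → ℤ) (n : ℕ) (x : ℤ) (ω : Ω) : ℝ :=
  ∑ k ∈ Finset.Icc 1 n,
    (if X (k - 1) ω = x then (1 : ℝ) else 0) /
      (Znum X (k - 1) (x - 1) ω + Znum X (k - 1) (x + 1) ω)

/-- `Y⁺_n(x)`: weighted number of crossings from `x` to `x+1` up to time `n`. -/
noncomputable def Yplus {Ω : Type*} (X : ℕ → Ω → ℤ) (n : ℕ) (x : ℤ) (ω : Ω) : ℝ :=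
  ∑ k ∈ Finset.Icc 1 n,
    (if X (k - 1) ω = x ∧ X k ω = x + 1 then (1 : ℝ) else 0) / Znum X (k - 1) (x + 1) ω

/-- `Y⁻_n(x)`: weighted number of crossings from `x` to `x-1` up to time `n`. -/
noncomputable def Yminus {Ω : Type*} (X : ℕ → Ω → ℤ) (n : ℕ) (x : ℤ) (ω : Ω) : ℝ :=
  ∑ k ∈ Finset.Icc 1 n,
    (if X (k - 1) ω = x ∧ X k ω = x - 1 then (1 : ℝ) else 0) / Znum X (k - 1) (x - 1) ω

/-- The event `Υ(x) = {Y_∞(x) < ∞}` (the sums `Y_n(x)` are nondecreasing in `n`,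
so finiteness of the limit is boundedness). -/
def Upsilon {Ω : Type*} (X : ℕ → Ω → ℤ) (x : ℤ) : Set Ω :=
  {ω | BddAbove (Set.range fun n => Ynum X n x ω)}

/-- The event `Υ⁺(x) = {Y⁺_∞(x) < ∞}`. -/
def UpsilonPlus {Ω : Type*} (X : ℕ → Ω → ℤ) (x : ℤ) : Set Ω :=
  {ω | BddAbove (Set.range fun n => Yplus X n x ω)}

/-- The event `Υ⁻(x) = {Y⁻_∞(x) < ∞}`. -/
def UpsilonMinus {Ω : Type*} (X : ℕ → Ω → ℤ) (x : ℤ) : Set Ω :=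
  {ω | BddAbove (Set.range fun n => Yminus X n x ω)}

/-- `α⁻_n(y) = Z_n(y-1)/(Z_n(y-1) + Z_n(y+1))`. -/
noncomputable def alphaMinus {Ω : Type*} (X : ℕ → Ω → ℤ) (n : ℕ) (y : ℤ) (ω : Ω) : ℝ :=
  Znum X n (y - 1) ω / (Znum X n (y - 1) ω + Znum X n (y + 1) ω)

/-- `(X_n)` is a vertex-reinforced random walk on `ℤ` started at `v0`:
it is adapted, starts at `v0`, a.s. makes nearest-neighbor steps, and the
conditional law of each step is proportional to the augmented occupations of
the two neighbors. -/
structure IsVRRW {Ω : Type*} {m0 : MeasurableSpace Ω} (μ : Measure Ω)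
    (ℱ : Filtration ℕ m0) (X : ℕ → Ω → ℤ) (v0 : ℤ) : Prop where
  adapted : Adapted ℱ X
  init : ∀ ω, X 0 ω = v0
  nearest : ∀ n, ∀ᵐ ω ∂μ, X (n + 1) ω = X n ω + 1 ∨ X (n + 1) ω = X n ω - 1
  step : ∀ n, ∀ᵐ ω ∂μ, ∀ x : ℤ,
    (μ[Set.indicator {ω' | X (n + 1) ω' = x} (fun _ => (1 : ℝ)) | ℱ n]) ω =
      if x = X n ω + 1 ∨ x = X n ω - 1 then
        Znum X n x ω / (Znum X n (X n ω - 1) ω + Znum X n (X n ω + 1) ω)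
      else 0


section Aux

open Finset

variable {Ω : Type*} {m0 : MeasurableSpace Ω} {μ : Measure Ω} {ℱ : Filtration ℕ m0}

/-- Weighted crossings from `x` to a generic neighbor `y`. -/
noncomputable def Ycross (X : ℕ → Ω → ℤ) (n : ℕ) (x y : ℤ) (ω : Ω) : ℝ :=
  ∑ k ∈ Finset.Icc 1 n,
    (if X (k - 1) ω = x ∧ X k ω = y then (1 : ℝ) else 0) / Znum X (k - 1) y ω

/-- Increment of `Ynum`. -/
noncomputable def dY (X : ℕ → Ω → ℤ) (x : ℤ) (n : ℕ) (ω : Ω) : ℝ :=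
  (if X n ω = x then (1 : ℝ) else 0) / (Znum X n (x - 1) ω + Znum X n (x + 1) ω)

/-- Increment of `Ycross`. -/
noncomputable def dC (X : ℕ → Ω → ℤ) (x y : ℤ) (n : ℕ) (ω : Ω) : ℝ :=
  (if X n ω = x ∧ X (n + 1) ω = y then (1 : ℝ) else 0) / Znum X n y ω

lemma one_le_Znum (X : ℕ → Ω → ℤ) (n : ℕ) (v : ℤ) (ω : Ω) : (1 : ℝ) ≤ Znum X n v ω := by
  have : (0:ℝ) ≤ ∑ i ∈ range (n+1), if X i ω = v then (1:ℝ) else 0 :=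
    Finset.sum_nonneg fun i _ => by positivity
  unfold Znum; linarith

lemma Znum_pos (X : ℕ → Ω → ℤ) (n : ℕ) (v : ℤ) (ω : Ω) : (0 : ℝ) < Znum X n v ω :=
  lt_of_lt_of_le one_pos (one_le_Znum X n v ω)

lemma denom_pos (X : ℕ → Ω → ℤ) (n : ℕ) (x : ℤ) (ω : Ω) :
    (0 : ℝ) < Znum X n (x - 1) ω + Znum X n (x + 1) ω := by
  have h1 := Znum_pos X n (x-1) ω; have h2 := Znum_pos X n (x+1) ω; linarith

lemma dY_nonneg (X : ℕ → Ω → ℤ) (x : ℤ) (n : ℕ) (ω : Ω) : 0 ≤ dY X x n ω := by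
  unfold dY
  have := (denom_pos X n x ω).le
  positivity

lemma dY_le_one (X : ℕ → Ω → ℤ) (x : ℤ) (n : ℕ) (ω : Ω) : dY X x n ω ≤ 1 := by
  unfold dY
  rw [div_le_one (denom_pos X n x ω)]
  have h1 := one_le_Znum X n (x-1) ω; have h2 := one_le_Znum X n (x+1) ω
  split <;> linarith

lemma dC_nonneg (X : ℕ → Ω → ℤ) (x y : ℤ) (n : ℕ) (ω : Ω) : 0 ≤ dC X x y n ω := by
  unfold dC
  have := (Znum_pos X n y ω).le
  positivity

lemma dC_le_one (X : ℕ → Ω → ℤ) (x y : ℤ) (n : ℕ) (ω : Ω) : dC X x y n ω ≤ 1 := by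
  unfold dC
  rw [div_le_one (Znum_pos X n y ω)]
  have h1 := one_le_Znum X n y ω
  split <;> linarith

lemma Ynum_succ (X : ℕ → Ω → ℤ) (n : ℕ) (x : ℤ) (ω : Ω) :
    Ynum X (n + 1) x ω = Ynum X n x ω + dY X x n ω := by
  unfold Ynum dY
  rw [show Finset.Icc 1 (n+1) = Finset.Ioc 0 (n+1) from Finset.Icc_add_one_left_eq_Ioc 0 (n+1),
    show Finset.Icc 1 n = Finset.Ioc 0 n from Finset.Icc_add_one_left_eq_Ioc 0 n,
    Finset.sum_Ioc_succ_top (Nat.zero_le n)]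
  simp

lemma Ycross_succ (X : ℕ → Ω → ℤ) (n : ℕ) (x y : ℤ) (ω : Ω) :
    Ycross X (n + 1) x y ω = Ycross X n x y ω + dC X x y n ω := by
  unfold Ycross dC
  rw [show Finset.Icc 1 (n+1) = Finset.Ioc 0 (n+1) from Finset.Icc_add_one_left_eq_Ioc 0 (n+1),
    show Finset.Icc 1 n = Finset.Ioc 0 n from Finset.Icc_add_one_left_eq_Ioc 0 n,
    Finset.sum_Ioc_succ_top (Nat.zero_le n)]
  simp

lemma Ynum_nonneg (X : ℕ → Ω → ℤ) (n : ℕ) (x : ℤ) (ω : Ω) : 0 ≤ Ynum X n x ω := by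
  induction n with
  | zero => simp [Ynum]
  | succ n ih => rw [Ynum_succ]; have := dY_nonneg X x n ω; linarith

lemma Ynum_le (X : ℕ → Ω → ℤ) (n : ℕ) (x : ℤ) (ω : Ω) : Ynum X n x ω ≤ n := by
  induction n with
  | zero => simp [Ynum]
  | succ n ih =>
    rw [Ynum_succ]; have := dY_le_one X x n ω; push_cast; push_cast at ih; linarith

lemma Ycross_nonneg (X : ℕ → Ω → ℤ) (n : ℕ) (x y : ℤ) (ω : Ω) : 0 ≤ Ycross X n x y ω := by
  induction n with
  | zero => simp [Ycross]
  | succ n ih => rw [Ycross_succ]; have := dC_nonneg X x y n ω; linarith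

lemma Ycross_le (X : ℕ → Ω → ℤ) (n : ℕ) (x y : ℤ) (ω : Ω) : Ycross X n x y ω ≤ n := by
  induction n with
  | zero => simp [Ycross]
  | succ n ih =>
    rw [Ycross_succ]; have := dC_le_one X x y n ω; push_cast; push_cast at ih; linarith

lemma indic_meas {X : ℕ → Ω → ℤ} (hX : Adapted ℱ X) {i n : ℕ} (hin : i ≤ n) (v : ℤ) :
    Measurable[ℱ n] fun ω => if X i ω = v then (1 : ℝ) else 0 := by
  have hXm : Measurable[ℱ n] (X i) := (hX i).mono (ℱ.mono hin) le_rfl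
  exact Measurable.ite (hXm (measurableSet_singleton v)) measurable_const measurable_const

lemma Znum_meas {X : ℕ → Ω → ℤ} (hX : Adapted ℱ X) {n m : ℕ} (hnm : n ≤ m) (v : ℤ) :
    Measurable[ℱ m] (Znum X n v) := by
  unfold Znum
  exact measurable_const.add (Finset.measurable_sum _ fun i hi =>
    indic_meas hX (le_trans (Nat.lt_succ_iff.mp (Finset.mem_range.mp hi)) hnm) v)

lemma Znum_sm {X : ℕ → Ω → ℤ} (hX : Adapted ℱ X) {n m : ℕ} (hnm : n ≤ m) (v : ℤ) :
    StronglyMeasurable[ℱ m] (Znum X n v) := (Znum_meas hX hnm v).stronglyMeasurable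

lemma dY_meas {X : ℕ → Ω → ℤ} (hX : Adapted ℱ X) (x : ℤ) (n : ℕ) :
    Measurable[ℱ n] (dY X x n) := by
  unfold dY
  exact (indic_meas hX le_rfl x).div
    ((Znum_meas hX le_rfl (x-1)).add (Znum_meas hX le_rfl (x+1)))

lemma dY_sm {X : ℕ → Ω → ℤ} (hX : Adapted ℱ X) (x : ℤ) (n : ℕ) :
    StronglyMeasurable[ℱ n] (dY X x n) := (dY_meas hX x n).stronglyMeasurable

lemma pairIndic_meas {X : ℕ → Ω → ℤ} (hX : Adapted ℱ X) {i j n : ℕ} (hin : i ≤ n) (hjn : j ≤ n)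
    (x y : ℤ) :
    Measurable[ℱ n] fun ω => if X i ω = x ∧ X j ω = y then (1 : ℝ) else 0 := by
  have hXi : Measurable[ℱ n] (X i) := (hX i).mono (ℱ.mono hin) le_rfl
  have hXj : Measurable[ℱ n] (X j) := (hX j).mono (ℱ.mono hjn) le_rfl
  have hs : MeasurableSet[ℱ n] {ω | X i ω = x ∧ X j ω = y} := by
    have h1 : MeasurableSet[ℱ n] {ω | X i ω = x} := hXi (measurableSet_singleton x)
    have h2 : MeasurableSet[ℱ n] {ω | X j ω = y} := hXj (measurableSet_singleton y)
    exact h1.inter h2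
  exact Measurable.ite hs measurable_const measurable_const

lemma dC_sm {X : ℕ → Ω → ℤ} (hX : Adapted ℱ X) (x y : ℤ) (n : ℕ) :
    StronglyMeasurable[ℱ (n + 1)] (dC X x y n) := by
  unfold dC
  exact ((pairIndic_meas hX (Nat.le_succ n) le_rfl x y).div
    (Znum_meas hX (Nat.le_succ n) y)).stronglyMeasurable

lemma Ynum_sm {X : ℕ → Ω → ℤ} (hX : Adapted ℱ X) (n : ℕ) (x : ℤ) :
    StronglyMeasurable[ℱ n] (Ynum X n x) := by
  unfold Ynum
  refine Measurable.stronglyMeasurable (Finset.measurable_sum _ fun k hk => ?_)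
  have hk' : k - 1 ≤ n := le_trans (Nat.sub_le k 1) (Finset.mem_Icc.mp hk).2
  exact (indic_meas hX hk' x).div
    ((Znum_meas hX hk' (x-1)).add (Znum_meas hX hk' (x+1)))

lemma Ycross_sm {X : ℕ → Ω → ℤ} (hX : Adapted ℱ X) (n : ℕ) (x y : ℤ) :
    StronglyMeasurable[ℱ n] (Ycross X n x y) := by
  unfold Ycross
  refine Measurable.stronglyMeasurable (Finset.measurable_sum _ fun k hk => ?_)
  have hk1 : k - 1 ≤ n := le_trans (Nat.sub_le k 1) (Finset.mem_Icc.mp hk).2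
  have hk2 : k ≤ n := (Finset.mem_Icc.mp hk).2
  exact (pairIndic_meas hX hk1 hk2 x y).div (Znum_meas hX hk1 y)

lemma integrable_of_bound [IsFiniteMeasure μ] {f : Ω → ℝ} (hf : AEStronglyMeasurable f μ)
    (C : ℝ) (h : ∀ ω, |f ω| ≤ C) : Integrable f μ :=
  ⟨hf, HasFiniteIntegral.of_bounded (C := C) (ae_of_all _ h)⟩

/-- The key conditional-expectation computation: the conditional expectation of the
increment of `Ycross` is the increment of `Ynum`. -/
lemma condexp_dC {X : ℕ → Ω → ℤ} {v0 : ℤ} [IsProbabilityMeasure μ]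
    (h : IsVRRW μ ℱ X v0) (x y : ℤ) (hy : y = x + 1 ∨ y = x - 1) (n : ℕ) :
    μ[dC X x y n | ℱ n] =ᵐ[μ] dY X x n := by
  set f : Ω → ℝ := fun ω => (if X n ω = x then (1:ℝ) else 0) / Znum X n y ω with hf
  set g : Ω → ℝ := Set.indicator {ω' | X (n+1) ω' = y} (fun _ => (1:ℝ)) with hg
  have hgval : ∀ ω, g ω = if X (n+1) ω = y then (1:ℝ) else 0 := fun ω => by
    simp only [hg, Set.indicator_apply, Set.mem_setOf_eq]
  have hfg : dC X x y n = f * g := by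
    funext ω
    simp only [dC, Pi.mul_apply, hgval, hf]
    by_cases h1 : X n ω = x <;> by_cases h2 : X (n+1) ω = y <;> simp [h1, h2]
  have hfsm : StronglyMeasurable[ℱ n] f :=
    ((indic_meas h.adapted le_rfl x).div (Znum_meas h.adapted le_rfl y)).stronglyMeasurable
  have hgsm : AEStronglyMeasurable g μ := by
    refine (Measurable.indicator measurable_const ?_).aestronglyMeasurable
    exact (ℱ.le (n+1)) _ ((h.adapted (n+1)) (measurableSet_singleton y))
  have hgbd : ∀ ω, |g ω| ≤ 1 := fun ω => by
    rw [hgval]; split <;> simp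
  have hgint : Integrable g μ := integrable_of_bound hgsm 1 hgbd
  have hfbd : ∀ ω, |f ω| ≤ 1 := fun ω => by
    rw [hf]
    have h1 := Znum_pos X n y ω
    have h2 := one_le_Znum X n y ω
    rw [abs_div, abs_of_pos h1, div_le_one h1]
    split <;> simp <;> linarith
  have hfgint : Integrable (f * g) μ := by
    refine integrable_of_bound ?_ 1 ?_
    · exact ((hfsm.mono (ℱ.le n)).aestronglyMeasurable).mul hgsm
    · intro ω
      rw [Pi.mul_apply, abs_mul]
      have := abs_nonneg (f ω)
      calc |f ω| * |g ω| ≤ 1 * 1 := mul_le_mul (hfbd ω) (hgbd ω) (abs_nonneg _) zero_le_one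
        _ = 1 := by ring
  have hmul := condExp_mul_of_stronglyMeasurable_left hfsm hfgint hgint
  rw [hfg]
  refine hmul.trans ?_
  filter_upwards [h.step n] with ω hstep
  have hsy := hstep y
  rw [Pi.mul_apply]
  rw [show (μ[g|ℱ n]) ω = _ from hsy]
  by_cases h1 : X n ω = x
  · have hcond : y = X n ω + 1 ∨ y = X n ω - 1 := by rw [h1]; exact hy
    rw [if_pos hcond]
    simp only [hf, dY, h1, if_pos rfl]
    have hZy := (Znum_pos X n y ω).ne'
    have hD := (denom_pos X n x ω).ne'
    rw [h1] at *
    field_simp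
  · have : f ω = 0 := by simp [hf, h1]
    simp [this, dY, h1]

/-- The main a.s. equivalence, for a generic neighbor `y` of `x`. -/
lemma upsilon_iff_cross {X : ℕ → Ω → ℤ} {v0 : ℤ} [IsProbabilityMeasure μ]
    (h : IsVRRW μ ℱ X v0) (x y : ℤ) (hy : y = x + 1 ∨ y = x - 1) :
    ∀ᵐ ω ∂μ, (BddAbove (Set.range fun n => Ynum X n x ω) ↔
      BddAbove (Set.range fun n => Ycross X n x y ω)) := by
  set M : ℕ → Ω → ℝ := fun n ω => Ycross X n x y ω - Ynum X n x ω with hM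
  have hMsm : ∀ n, StronglyMeasurable[ℱ n] (M n) := fun n =>
    (Ycross_sm h.adapted n x y).sub (Ynum_sm h.adapted n x)
  have hMint : ∀ n, Integrable (M n) μ := fun n => by
    refine integrable_of_bound ((hMsm n).mono (ℱ.le n)).aestronglyMeasurable (2 * n)
      fun ω => ?_
    have h1 := Ycross_nonneg X n x y ω
    have h2 := Ycross_le X n x y ω
    have h3 := Ynum_nonneg X n x ω
    have h4 := Ynum_le X n x ω
    rw [abs_le]; constructor <;> simp only [hM] <;> linarith
  have hdYint : ∀ n, Integrable (dY X x n) μ := fun n => by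
    refine integrable_of_bound ((dY_sm h.adapted x n).mono (ℱ.le n)).aestronglyMeasurable 1
      fun ω => ?_
    rw [abs_le]
    exact ⟨by linarith [dY_nonneg X x n ω], dY_le_one X x n ω⟩
  have hdCint : ∀ n, Integrable (dC X x y n) μ := fun n => by
    refine integrable_of_bound ((dC_sm h.adapted x y n).mono (ℱ.le (n+1))).aestronglyMeasurable 1
      fun ω => ?_
    rw [abs_le]
    exact ⟨by linarith [dC_nonneg X x y n ω], dC_le_one X x y n ω⟩
  have hMart : Martingale M ℱ μ := by
    refine martingale_nat (fun n => hMsm n) hMint fun i => ?_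
    have hMrw : M (i+1) = M i + (dC X x y i - dY X x i) := by
      funext ω
      simp only [hM, Pi.add_apply, Pi.sub_apply, Ycross_succ, Ynum_succ]
      ring
    rw [hMrw]
    refine ((condExp_add (hMint i) ((hdCint i).sub (hdYint i)) _).trans ?_).symm
    have h2 := condExp_sub (μ := μ) (m := ℱ i) (hdCint i) (hdYint i)
    have h5 := condexp_dC h x y hy i
    have h3 : μ[M i|ℱ i] = M i := condExp_of_stronglyMeasurable (ℱ.le i) (hMsm i) (hMint i)
    have h4 : μ[dY X x i|ℱ i] = dY X x i :=
      condExp_of_stronglyMeasurable (ℱ.le i) (dY_sm h.adapted x i) (hdYint i)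
    filter_upwards [h2, h5] with ω hω2 hω5
    rw [Pi.add_apply, h3, hω2, Pi.sub_apply, hω5, h4]
    ring
  have hbdd : ∀ᵐ ω ∂μ, ∀ i, |M (i+1) ω - M i ω| ≤ ((1 : NNReal) : ℝ) := by
    refine ae_of_all _ fun ω i => ?_
    have he : M (i+1) ω - M i ω = dC X x y i ω - dY X x i ω := by
      simp only [hM, Ycross_succ, Ynum_succ]; ring
    rw [he, abs_le, NNReal.coe_one]
    have b1 := dC_nonneg X x y i ω
    have b2 := dC_le_one X x y i ω
    have b3 := dY_nonneg X x i ω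
    have b4 := dY_le_one X x i ω
    constructor <;> linarith
  filter_upwards [hMart.bddAbove_range_iff_bddBelow_range hbdd] with ω hdi
  constructor
  · rintro ⟨b, hb⟩
    have hbelow : BddBelow (Set.range fun n => M n ω) := by
      refine ⟨-b, ?_⟩
      rintro _ ⟨n, rfl⟩
      have h1 := Ycross_nonneg X n x y ω
      have h2 : Ynum X n x ω ≤ b := hb ⟨n, rfl⟩
      simp only [hM]; linarith
    obtain ⟨c, hc⟩ := hdi.mpr hbelow
    refine ⟨c + b, ?_⟩
    rintro _ ⟨n, rfl⟩
    have h1 : M n ω ≤ c := hc ⟨n, rfl⟩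
    have h2 : Ynum X n x ω ≤ b := hb ⟨n, rfl⟩
    simp only [hM] at h1; linarith
  · rintro ⟨b, hb⟩
    have habove : BddAbove (Set.range fun n => M n ω) := by
      refine ⟨b, ?_⟩
      rintro _ ⟨n, rfl⟩
      have h1 := Ynum_nonneg X n x ω
      have h2 : Ycross X n x y ω ≤ b := hb ⟨n, rfl⟩
      simp only [hM]; linarith
    obtain ⟨c, hc⟩ := hdi.mp habove
    refine ⟨b - c, ?_⟩
    rintro _ ⟨n, rfl⟩
    have h1 : c ≤ M n ω := hc ⟨n, rfl⟩
    have h2 : Ycross X n x y ω ≤ b := hb ⟨n, rfl⟩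
    simp only [hM] at h1; linarith

end Aux

/-- Lemma 2.1 of Tarrès: for the VRRW on `ℤ`, the events `Υ(x)`, `Υ⁺(x)` and
`Υ⁻(x)` coincide almost surely. -/
theorem upsilon_eq_upsilonPlus_eq_upsilonMinus
    {Ω : Type*} {m0 : MeasurableSpace Ω} (μ : Measure Ω) [IsProbabilityMeasure μ]
    (ℱ : Filtration ℕ m0) (X : ℕ → Ω → ℤ) (v0 : ℤ) (h : IsVRRW μ ℱ X v0) (x : ℤ) :
    ∀ᵐ ω ∂μ, (ω ∈ Upsilon X x ↔ ω ∈ UpsilonPlus X x) ∧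
      (ω ∈ Upsilon X x ↔ ω ∈ UpsilonMinus X x) := by
  filter_upwards [upsilon_iff_cross h x (x + 1) (Or.inl rfl),
    upsilon_iff_cross h x (x - 1) (Or.inr rfl)] with ω h1 h2
  exact ⟨h1, h2⟩
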